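/- Let 𝒢 be a strongly maximal stochastic subgroup of O(d²), i.e. a stochastic subgroup that is not contained in any strictly larger stochastic subgroup and such that the closed convex hull of its orbital germ G = {s ∈ ℝ^(d²) : s(j) = (d R_{ij} + 1)/(d(d+1)) for some R ∈ 𝒢 and some i} is a qplex. Then cc(G) is the unique qplex Q whose preservation group equals 𝒢. -/

import Mathlib

noncomputable section

/- Ambient space: ℝ^(d²) with the standard inner product. -/
abbrev V (d : ℕ) := EuclideanSpace ℝ (Fin (d^2))

/-- The standard inner product ⟨u, v⟩ = ∑ i, u i * v i. -/
def ip {d : ℕ} (u v : V d) : ℝ := inner ℝ u v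

/-- The barycenter c, with all entries equal to 1/d². -/
def cpt (d : ℕ) : V d := WithLp.toLp 2 (fun _ => 1/(d^2:ℝ))

/-- The hyperplane H = {u : ⟨u, c⟩ = 1/d²} of vectors whose entries sum to 1. -/
def Hs (d : ℕ) : Set (V d) := {u | ip u (cpt d) = 1/(d^2:ℝ)}

/-- The polar A* = {u ∈ H : ⟨u, v⟩ ≥ 1/(d(d+1)) for all v ∈ A}. -/
def polar (d : ℕ) (A : Set (V d)) : Set (V d) :=
  {u | u ∈ Hs d ∧ ∀ v ∈ A, 1/((d:ℝ)*((d:ℝ)+1)) ≤ ip u v}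

/-- cc(A): the closed convex hull of A. -/
def cc (d : ℕ) (A : Set (V d)) : Set (V d) := closure (convexHull ℝ A)

/-- The probability simplex Δ = {u ∈ H : u i ≥ 0 for all i}. -/
def probSimplex (d : ℕ) : Set (V d) := {u | u ∈ Hs d ∧ ∀ i, 0 ≤ u i}

/-- The basis distributions e_k, with e_k(i) = (δ_{ki} + 1/d)/(d+1). -/
def basisDist (d : ℕ) (k : Fin (d^2)) : V d :=
  WithLp.toLp 2 (fun i => ((if k = i then (1:ℝ) else 0) + 1/(d:ℝ)) / ((d:ℝ)+1))

/-- The basis simplex Δ_e: the convex hull of the basis distributions. -/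
def basisSimplex (d : ℕ) : Set (V d) := convexHull ℝ (Set.range (basisDist d))

/-- The out-ball B_o = {u ∈ H : ⟨u, u⟩ ≤ 2/(d(d+1))}. -/
def outBall (d : ℕ) : Set (V d) := {u | u ∈ Hs d ∧ ip u u ≤ 2/((d:ℝ)*((d:ℝ)+1))}

/-- The out-sphere S_o = {u ∈ H : ⟨u, u⟩ = 2/(d(d+1))}. -/
def outSphere (d : ℕ) : Set (V d) := {u | u ∈ Hs d ∧ ip u u = 2/((d:ℝ)*((d:ℝ)+1))}

/-- The in-ball B_i = {u ∈ H : ‖u − c‖² ≤ 1/(d²(d²−1))}. -/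
def inBall (d : ℕ) : Set (V d) :=
  {u | u ∈ Hs d ∧ ‖u - cpt d‖^2 ≤ 1/((d:ℝ)^2*((d:ℝ)^2-1))}

/-- The in-sphere S_i = {u ∈ H : ‖u − c‖² = 1/(d²(d²−1))}. -/
def inSphere (d : ℕ) : Set (V d) :=
  {u | u ∈ Hs d ∧ ‖u - cpt d‖^2 = 1/((d:ℝ)^2*((d:ℝ)^2-1))}

/-- The mid-ball B_m = {u ∈ H : ‖u − c‖² ≤ 1/(d²(d+1))}. -/
def midBall (d : ℕ) : Set (V d) :=
  {u | u ∈ Hs d ∧ ‖u - cpt d‖^2 ≤ 1/((d:ℝ)^2*((d:ℝ)+1))}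

/-- A germ: a subset of Δ whose pairwise inner products satisfy the
fundamental inequalities 1/(d(d+1)) ≤ ⟨p, s⟩ ≤ 2/(d(d+1)). -/
def IsGerm (d : ℕ) (G : Set (V d)) : Prop :=
  G ⊆ probSimplex d ∧
  ∀ p ∈ G, ∀ s ∈ G, 1/((d:ℝ)*((d:ℝ)+1)) ≤ ip p s ∧ ip p s ≤ 2/((d:ℝ)*((d:ℝ)+1))

/-- A qplex: a self-polar subset of Δ ∩ B_o. -/
def IsQplex (d : ℕ) (Q : Set (V d)) : Prop :=
  Q ⊆ probSimplex d ∩ outBall d ∧ Q = polar d Q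

/-- Action of a d²×d² matrix on a vector: (R u)(i) = ∑ j, R i j * u j. -/
def mvec (d : ℕ) (R : Matrix (Fin (d^2)) (Fin (d^2)) ℝ) (u : V d) : V d :=
  WithLp.toLp 2 (fun i => ∑ j, R i j * u j)

/-- A stochastic subgroup of O(d²): every element has all entries ≥ −1/d and
fixes the barycenter c. -/
def IsStochasticSubgroup (d : ℕ)
    (𝒢 : Subgroup (Matrix.orthogonalGroup (Fin (d^2)) ℝ)) : Prop :=
  ∀ R ∈ 𝒢,
    (∀ i j, -(1/(d:ℝ)) ≤ (R : Matrix (Fin (d^2)) (Fin (d^2)) ℝ) i j) ∧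
    mvec d (R : Matrix (Fin (d^2)) (Fin (d^2)) ℝ) (cpt d) = cpt d

/-- The orbital germ of 𝒢: the orbit of the basis distributions under 𝒢,
i.e. the vectors s^R_i with s^R_i(j) = (d R_{ij} + 1)/(d(d+1)). -/
def orbitalGerm (d : ℕ)
    (𝒢 : Subgroup (Matrix.orthogonalGroup (Fin (d^2)) ℝ)) : Set (V d) :=
  {s | ∃ R ∈ 𝒢, ∃ i, s = fun j =>
    ((d:ℝ) * (R : Matrix (Fin (d^2)) (Fin (d^2)) ℝ) i j + 1)/((d:ℝ)*((d:ℝ)+1))}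

/-- The preservation group of Q: the orthogonal matrices mapping Q onto Q. -/
def presGroup (d : ℕ) (Q : Set (V d)) :
    Set (Matrix.orthogonalGroup (Fin (d^2)) ℝ) :=
  {R | mvec d (R : Matrix (Fin (d^2)) (Fin (d^2)) ℝ) '' Q = Q}


section Aux

variable {d : ℕ}

lemma ip_eq (u v : V d) : ip u v = ∑ i, u i * v i := by
  simp [ip, PiLp.inner_apply, RCLike.inner_apply, conj_trivial]
  exact Finset.sum_congr rfl fun i _ => mul_comm _ _

lemma ip_eq_dot (u v : V d) : ip u v = dotProduct u v := by
  rw [ip_eq]; rfl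

lemma mvec_eq_mulVec (M : Matrix (Fin (d^2)) (Fin (d^2)) ℝ) (u : V d) :
    mvec d M u = M.mulVec u := rfl

lemma coe_transpose (R : Matrix.orthogonalGroup (Fin (d^2)) ℝ) :
    (R : Matrix (Fin (d^2)) (Fin (d^2)) ℝ).transpose = star (R : Matrix (Fin (d^2)) (Fin (d^2)) ℝ) := by
  rw [Matrix.star_eq_conjTranspose, Matrix.conjTranspose_eq_transpose_of_trivial]

lemma ip_mvec (R : Matrix.orthogonalGroup (Fin (d^2)) ℝ) (u v : V d) :
    ip (mvec d R u) (mvec d R v) = ip u v := by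
  rw [ip_eq_dot, ip_eq_dot, mvec_eq_mulVec, mvec_eq_mulVec,
    Matrix.dotProduct_mulVec, ← Matrix.mulVec_transpose, Matrix.mulVec_mulVec,
    coe_transpose, R.2.1, Matrix.one_mulVec]

lemma mvec_mvec (M N : Matrix (Fin (d^2)) (Fin (d^2)) ℝ) (u : V d) :
    mvec d M (mvec d N u) = mvec d (M * N) u := by
  apply WithLp.ofLp_injective 2
  rw [mvec_eq_mulVec, mvec_eq_mulVec, mvec_eq_mulVec, Matrix.mulVec_mulVec]

lemma mvec_one (u : V d) : mvec d (1 : Matrix (Fin (d^2)) (Fin (d^2)) ℝ) u = u := by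
  apply WithLp.ofLp_injective 2
  rw [mvec_eq_mulVec, Matrix.one_mulVec]

lemma dpos (hd : 2 ≤ d) : (0:ℝ) < d := by exact_mod_cast Nat.lt_of_lt_of_le Nat.zero_lt_two hd

lemma sum_entries (hd : 2 ≤ d) {u : V d} (hu : u ∈ Hs d) : ∑ i, u i = 1 := by
  have h0 : (0:ℝ) < d := dpos hd
  have := hu
  simp only [Hs, Set.mem_setOf_eq, ip_eq, cpt, PiLp.toLp_apply] at this
  rw [← Finset.sum_mul] at this
  have h2 : ((d:ℝ)^2) ≠ 0 := by positivity
  field_simp at this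
  linarith [this]

lemma mem_Hs (hd : 2 ≤ d) {u : V d} (h : ∑ i, u i = 1) : u ∈ Hs d := by
  have h0 : (0:ℝ) < d := dpos hd
  simp only [Hs, Set.mem_setOf_eq, ip_eq, cpt, PiLp.toLp_apply]
  rw [← Finset.sum_mul, h, one_mul]

lemma rowsum_one (hd : 2 ≤ d) {M : Matrix (Fin (d^2)) (Fin (d^2)) ℝ}
    (hM : mvec d M (cpt d) = cpt d) (i : Fin (d^2)) : ∑ j, M i j = 1 := by
  have h0 : (0:ℝ) < d := dpos hd
  have := congrFun (congrArg WithLp.ofLp hM) i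
  simp only [mvec, cpt, WithLp.ofLp_toLp] at this
  rw [← Finset.sum_mul] at this
  have h2 : ((d:ℝ)^2) ≠ 0 := by positivity
  field_simp at this
  linarith

lemma mvec_basisDist (hd : 2 ≤ d) {M : Matrix (Fin (d^2)) (Fin (d^2)) ℝ}
    (hrow : ∀ i, ∑ j, M i j = 1) (k : Fin (d^2)) :
    mvec d M (basisDist d k) = fun j => ((d:ℝ) * M j k + 1)/((d:ℝ)*((d:ℝ)+1)) := by
  have h0 : (0:ℝ) < d := dpos hd
  funext j
  simp only [mvec, basisDist, WithLp.ofLp_toLp]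
  have h1 : ∀ i, M j i * (((if k = i then (1:ℝ) else 0) + 1/(d:ℝ)) / ((d:ℝ)+1))
      = (if k = i then M j i else 0) / ((d:ℝ)+1) + M j i * (1/(d:ℝ)) / ((d:ℝ)+1) := by
    intro i; by_cases h : k = i <;> simp [h] <;> ring
  rw [Finset.sum_congr rfl (fun i _ => h1 i), Finset.sum_add_distrib, ← Finset.sum_div,
    Finset.sum_ite_eq, ← Finset.sum_div, ← Finset.sum_mul, hrow j]
  simp only [Finset.mem_univ, if_true]
  field_simp

lemma ip_basisDist (hd : 2 ≤ d) (k : Fin (d^2)) (v : V d) :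
    ip (basisDist d k) v = (v k + (1/(d:ℝ)) * ∑ i, v i)/((d:ℝ)+1) := by
  have h0 : (0:ℝ) < d := dpos hd
  rw [ip_eq]
  have h1 : ∀ i, basisDist d k i * v i
      = (if k = i then v i else 0) / ((d:ℝ)+1) + (1/(d:ℝ)) * v i / ((d:ℝ)+1) := by
    intro i; simp only [basisDist, PiLp.toLp_apply]; by_cases h : k = i <;> simp [h] <;> ring
  rw [Finset.sum_congr rfl (fun i _ => h1 i), Finset.sum_add_distrib, ← Finset.sum_div,
    Finset.sum_ite_eq, ← Finset.sum_div, ← Finset.mul_sum]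
  simp only [Finset.mem_univ, if_true]
  ring

lemma sum_basisDist (hd : 2 ≤ d) (k : Fin (d^2)) : ∑ i, basisDist d k i = 1 := by
  have h0 : (0:ℝ) < d := dpos hd
  simp only [basisDist, PiLp.toLp_apply]
  rw [← Finset.sum_div, Finset.sum_add_distrib, Finset.sum_ite_eq, Finset.sum_const,
    Finset.card_fin]
  simp only [Finset.mem_univ, if_true]
  field_simp
  ring_nf
  rw [pow_two, mul_assoc, mul_inv_cancel₀ h0.ne', mul_one]

lemma basisDist_mem_Hs (hd : 2 ≤ d) (k : Fin (d^2)) : basisDist d k ∈ Hs d :=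
  mem_Hs hd (sum_basisDist hd k)

lemma ip_cpt_self (hd : 2 ≤ d) : ip (cpt d) (cpt d) = 1/((d:ℝ)^2) := by
  have h0 : (0:ℝ) < d := dpos hd
  rw [ip_eq]
  simp only [cpt, PiLp.toLp_apply, Finset.sum_const, Finset.card_fin, nsmul_eq_mul]
  have h2 : ((d:ℝ)^2) ≠ 0 := by positivity
  push_cast
  field_simp

lemma unique_min (hd : 2 ≤ d) {u : V d} (hu : u ∈ Hs d)
    (h2 : ip u u ≤ 1/((d:ℝ)^2)) : u = cpt d := by
  have hle : ip (u - cpt d) (u - cpt d) ≤ 0 := by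
    have e : (inner ℝ (u - cpt d) (u - cpt d) : ℝ)
        = inner ℝ u u - 2 * inner ℝ u (cpt d) + inner ℝ (cpt d) (cpt d) :=
      real_inner_sub_sub_self u (cpt d)
    have h3 : ip u (cpt d) = 1/((d:ℝ)^2) := hu
    have h4 := ip_cpt_self hd
    simp only [ip] at *
    rw [e, h3, h4]
    linarith
  have hge : (0:ℝ) ≤ ip (u - cpt d) (u - cpt d) := real_inner_self_nonneg
  have : u - cpt d = 0 := by
    have : (inner ℝ (u - cpt d) (u - cpt d) : ℝ) = 0 := le_antisymm hle hge
    exact inner_self_eq_zero.mp this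
  exact sub_eq_zero.mp this

lemma sum_apply_V {s : Finset (Fin (d^2))} (f : Fin (d^2) → V d) (i : Fin (d^2)) :
    (∑ k ∈ s, f k) i = ∑ k ∈ s, f k i := by
  induction s using Finset.induction with
  | empty => rfl
  | insert a s h ih => rw [Finset.sum_insert h, Finset.sum_insert h, PiLp.add_apply, ih]

variable {𝒢 : Subgroup (Matrix.orthogonalGroup (Fin (d^2)) ℝ)}

/-- Representation of the orbital germ via images of basis distributions. -/

lemma germ_repr (hd : 2 ≤ d) (hst : IsStochasticSubgroup d 𝒢) :
    orbitalGerm d 𝒢 = {s | ∃ R ∈ 𝒢, ∃ i, s = mvec d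
      (R : Matrix (Fin (d^2)) (Fin (d^2)) ℝ) (basisDist d i)} := by
  ext s
  constructor
  · rintro ⟨R, hR, i, hs⟩
    refine ⟨R⁻¹, 𝒢.inv_mem hR, i, ?_⟩
    apply WithLp.ofLp_injective 2
    rw [hs, mvec_basisDist hd (fun j => rowsum_one hd (hst _ (𝒢.inv_mem hR)).2 j)]
    funext j
    have : ((R⁻¹ : Matrix.orthogonalGroup (Fin (d^2)) ℝ) :
        Matrix (Fin (d^2)) (Fin (d^2)) ℝ) j i = (R : Matrix (Fin (d^2)) (Fin (d^2)) ℝ) i j := by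
      rw [Matrix.UnitaryGroup.inv_val, Matrix.star_apply, star_trivial]
    rw [this]
  · rintro ⟨R, hR, i, rfl⟩
    refine ⟨R⁻¹, 𝒢.inv_mem hR, i, ?_⟩
    rw [mvec_basisDist hd (fun j => rowsum_one hd (hst _ hR).2 j)]
    funext j
    have : ((R⁻¹ : Matrix.orthogonalGroup (Fin (d^2)) ℝ) :
        Matrix (Fin (d^2)) (Fin (d^2)) ℝ) i j = (R : Matrix (Fin (d^2)) (Fin (d^2)) ℝ) j i := by
      rw [Matrix.UnitaryGroup.inv_val, Matrix.star_apply, star_trivial]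
    rw [this]

lemma basisDist_mem_germ (hd : 2 ≤ d) (hst : IsStochasticSubgroup d 𝒢) (k : Fin (d^2)) :
    basisDist d k ∈ orbitalGerm d 𝒢 := by
  rw [germ_repr hd hst]
  refine ⟨1, 𝒢.one_mem, k, ?_⟩
  rw [Matrix.UnitaryGroup.one_val, mvec_one]

lemma mvec_germ_subset (hd : 2 ≤ d) (hst : IsStochasticSubgroup d 𝒢)
    {R : Matrix.orthogonalGroup (Fin (d^2)) ℝ} (hR : R ∈ 𝒢) :
    mvec d (R : Matrix (Fin (d^2)) (Fin (d^2)) ℝ) '' orbitalGerm d 𝒢 ⊆ orbitalGerm d 𝒢 := by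
  rw [germ_repr hd hst]
  rintro - ⟨s, ⟨R', hR', i, rfl⟩, rfl⟩
  exact ⟨R * R', 𝒢.mul_mem hR hR', i, by
    rw [mvec_mvec, Matrix.UnitaryGroup.mul_val]⟩

/-- `mvec` as a linear map. -/

def mvecL (d : ℕ) (M : Matrix (Fin (d^2)) (Fin (d^2)) ℝ) : V d →ₗ[ℝ] V d where
  toFun := mvec d M
  map_add' u v := by
    ext i
    simp only [mvec, PiLp.add_apply, mul_add, Finset.sum_add_distrib]
  map_smul' c u := by
    ext i
    simp only [mvec, PiLp.smul_apply, RingHom.id_apply, smul_eq_mul, Finset.mul_sum]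
    exact Finset.sum_congr rfl fun j _ => by ring

lemma mvec_continuous (M : Matrix (Fin (d^2)) (Fin (d^2)) ℝ) :
    Continuous (mvec d M) := (mvecL d M).continuous_of_finiteDimensional

lemma mvec_cc_subset (M : Matrix (Fin (d^2)) (Fin (d^2)) ℝ) {A : Set (V d)}
    (h : mvec d M '' A ⊆ A) : mvec d M '' cc d A ⊆ cc d A := by
  have h1 : mvec d M '' cc d A ⊆ closure (mvec d M '' convexHull ℝ A) :=
    image_closure_subset_closure_image (mvec_continuous M)
  have h2 : mvec d M '' convexHull ℝ A = convexHull ℝ (mvec d M '' A) :=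
    (mvecL d M).image_convexHull A
  refine h1.trans ?_
  rw [h2]
  exact closure_mono (convexHull_mono h)

lemma mvec_inv_cancel (R : Matrix.orthogonalGroup (Fin (d^2)) ℝ) (u : V d) :
    mvec d (R : Matrix (Fin (d^2)) (Fin (d^2)) ℝ)
      (mvec d ((R⁻¹ : Matrix.orthogonalGroup (Fin (d^2)) ℝ) :
        Matrix (Fin (d^2)) (Fin (d^2)) ℝ) u) = u := by
  rw [mvec_mvec, ← Matrix.UnitaryGroup.mul_val, mul_inv_cancel,
    Matrix.UnitaryGroup.one_val, mvec_one]

lemma mvec_cc_eq (hd : 2 ≤ d) (hst : IsStochasticSubgroup d 𝒢)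
    {R : Matrix.orthogonalGroup (Fin (d^2)) ℝ} (hR : R ∈ 𝒢) :
    mvec d (R : Matrix (Fin (d^2)) (Fin (d^2)) ℝ) '' cc d (orbitalGerm d 𝒢)
      = cc d (orbitalGerm d 𝒢) := by
  apply Set.Subset.antisymm
  · exact mvec_cc_subset _ (mvec_germ_subset hd hst hR)
  · intro u hu
    refine ⟨mvec d ((R⁻¹ : Matrix.orthogonalGroup (Fin (d^2)) ℝ) :
        Matrix (Fin (d^2)) (Fin (d^2)) ℝ) u, ?_, mvec_inv_cancel R u⟩
    exact mvec_cc_subset _ (mvec_germ_subset hd hst (𝒢.inv_mem hR)) ⟨u, hu, rfl⟩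

/-- The preservation group of any set, as a subgroup. -/

def presSubgroup (d : ℕ) (Q : Set (V d)) :
    Subgroup (Matrix.orthogonalGroup (Fin (d^2)) ℝ) where
  carrier := presGroup d Q
  one_mem' := by
    show mvec d _ '' Q = Q
    rw [Matrix.UnitaryGroup.one_val]
    have : mvec d (1 : Matrix (Fin (d^2)) (Fin (d^2)) ℝ) = id := funext fun u => mvec_one u
    rw [this, Set.image_id]
  mul_mem' := by
    rintro a b (ha : _ = _) (hb : _ = _)
    show mvec d _ '' Q = Q
    rw [Matrix.UnitaryGroup.mul_val]
    have : ∀ u, mvec d ((a : Matrix (Fin (d^2)) (Fin (d^2)) ℝ) * b) u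
        = mvec d a (mvec d b u) := fun u => (mvec_mvec _ _ u).symm
    calc mvec d ((a : Matrix (Fin (d^2)) (Fin (d^2)) ℝ) * b) '' Q
        = mvec d (a : Matrix (Fin (d^2)) (Fin (d^2)) ℝ) ''
            (mvec d (b : Matrix (Fin (d^2)) (Fin (d^2)) ℝ) '' Q) := by
          rw [Set.image_image]; exact Set.image_congr fun u _ => this u
      _ = Q := by rw [hb, ha]
  inv_mem' := by
    rintro a (ha : _ = _)
    show mvec d _ '' Q = Q
    calc mvec d ((a⁻¹ : Matrix.orthogonalGroup (Fin (d^2)) ℝ) :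
          Matrix (Fin (d^2)) (Fin (d^2)) ℝ) '' Q
        = mvec d ((a⁻¹ : Matrix.orthogonalGroup (Fin (d^2)) ℝ) :
          Matrix (Fin (d^2)) (Fin (d^2)) ℝ) ''
            (mvec d (a : Matrix (Fin (d^2)) (Fin (d^2)) ℝ) '' Q) := by rw [ha]
      _ = Q := by
          rw [Set.image_image]
          have : ∀ u, mvec d ((a⁻¹ : Matrix.orthogonalGroup (Fin (d^2)) ℝ) :
              Matrix (Fin (d^2)) (Fin (d^2)) ℝ)
              (mvec d (a : Matrix (Fin (d^2)) (Fin (d^2)) ℝ) u) = u := by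
            intro u
            rw [mvec_mvec, ← Matrix.UnitaryGroup.mul_val, inv_mul_cancel,
              Matrix.UnitaryGroup.one_val, mvec_one]
          simp only [this, Set.image_id']

lemma sum_basisDist' (hd : 2 ≤ d) (i : Fin (d^2)) : ∑ k, basisDist d k i = 1 := by
  have h0 : (0:ℝ) < d := dpos hd
  simp only [basisDist]
  rw [← Finset.sum_div, Finset.sum_add_distrib, Finset.sum_const, Finset.card_fin]
  rw [Finset.sum_ite_eq' Finset.univ i (fun _ => (1:ℝ))]
  simp only [Finset.mem_univ, if_true, nsmul_eq_mul]
  field_simp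
  push_cast
  ring

lemma cpt_mem_cc (hd : 2 ≤ d) (hst : IsStochasticSubgroup d 𝒢) :
    cpt d ∈ cc d (orbitalGerm d 𝒢) := by
  have h0 : (0:ℝ) < d := dpos hd
  apply subset_closure
  have hmem : ∀ k, basisDist d k ∈ convexHull ℝ (orbitalGerm d 𝒢) :=
    fun k => subset_convexHull ℝ _ (basisDist_mem_germ hd hst k)
  have hcv : Convex ℝ (convexHull ℝ (orbitalGerm d 𝒢)) := convex_convexHull ℝ _
  have key : cpt d = ∑ k : Fin (d^2), (1/((d:ℝ)^2)) • basisDist d k := by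
    ext i
    rw [sum_apply_V]
    simp only [PiLp.smul_apply, smul_eq_mul]
    rw [← Finset.mul_sum, sum_basisDist' hd i]
    simp [cpt]
  rw [key]
  refine hcv.sum_mem (fun k _ => by positivity) ?_ (fun k _ => hmem k)
  rw [Finset.sum_const, Finset.card_fin, nsmul_eq_mul]
  push_cast
  field_simp

lemma polar_antitone {A B : Set (V d)} (h : A ⊆ B) : polar d B ⊆ polar d A :=
  fun u hu => ⟨hu.1, fun v hv => hu.2 v (h hv)⟩

lemma polar_convex (A : Set (V d)) : Convex ℝ (polar d A) := by
  rintro u ⟨hu1, hu2⟩ v ⟨hv1, hv2⟩ a b ha hb hab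
  have key : ∀ w : V d, ip (a • u + b • v) w = a * ip u w + b * ip v w := by
    intro w
    simp only [ip, inner_add_left, real_inner_smul_left]
  constructor
  · show ip _ _ = _
    rw [key, hu1, hv1]
    have : a * (1/((d:ℝ)^2)) + b * (1/((d:ℝ)^2)) = (a + b) * (1/((d:ℝ)^2)) := by ring
    rw [this, hab, one_mul]
  · intro w hw
    rw [key]
    have h1 := hu2 w hw
    have h2 := hv2 w hw
    have hm : a * (1/((d:ℝ)*((d:ℝ)+1))) + b * (1/((d:ℝ)*((d:ℝ)+1)))
        = 1/((d:ℝ)*((d:ℝ)+1)) := by rw [← add_mul, hab, one_mul]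
    linarith [mul_le_mul_of_nonneg_left h1 ha, mul_le_mul_of_nonneg_left h2 hb]

lemma polar_closed (A : Set (V d)) : IsClosed (polar d A) := by
  have h1 : IsClosed {u : V d | u ∈ Hs d} := by
    have : Continuous fun u : V d => ip u (cpt d) :=
      Continuous.inner continuous_id continuous_const
    exact isClosed_eq this continuous_const
  have h2 : IsClosed {u : V d | ∀ v ∈ A, 1/((d:ℝ)*((d:ℝ)+1)) ≤ ip u v} := by
    have : {u : V d | ∀ v ∈ A, 1/((d:ℝ)*((d:ℝ)+1)) ≤ ip u v}
        = ⋂ v ∈ A, {u : V d | 1/((d:ℝ)*((d:ℝ)+1)) ≤ ip u v} := by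
      ext u; simp
    rw [this]
    refine isClosed_biInter fun v _ => ?_
    have hc : Continuous fun u : V d => ip u v :=
      Continuous.inner continuous_id continuous_const
    exact isClosed_le continuous_const hc
  exact (h1.inter h2 : IsClosed ({u : V d | u ∈ Hs d} ∩ _))

/-- Every qplex contains the basis distributions. -/

lemma basisDist_mem_qplex (hd : 2 ≤ d) {Q : Set (V d)} (hQ : IsQplex d Q)
    (k : Fin (d^2)) : basisDist d k ∈ Q := by
  have h0 : (0:ℝ) < d := dpos hd
  rw [hQ.2]
  refine ⟨basisDist_mem_Hs hd k, fun v hv => ?_⟩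
  obtain ⟨⟨hvH, hvpos⟩, -⟩ := hQ.1 hv
  rw [ip_basisDist hd k v, sum_entries hd hvH, mul_one, ← div_div]
  have hpos : (0:ℝ) < (d:ℝ)+1 := by linarith
  have hnum : 1/(d:ℝ) ≤ v k + 1/(d:ℝ) := by linarith [hvpos k]
  gcongr

lemma germ_subset_cc : orbitalGerm d 𝒢 ⊆ cc d (orbitalGerm d 𝒢) :=
  (subset_convexHull ℝ _).trans subset_closure

end Aux

/-- if 𝒢 is a strongly maximal stochastic subgroup of O(d²),
then cc of its orbital germ is the unique qplex whose preservation group is 𝒢. -/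
theorem statement18 (d : ℕ) (hd : 2 ≤ d)
    (𝒢 : Subgroup (Matrix.orthogonalGroup (Fin (d^2)) ℝ))
    (hst : IsStochasticSubgroup d 𝒢)
    (hmax : ∀ 𝒢' : Subgroup (Matrix.orthogonalGroup (Fin (d^2)) ℝ),
      IsStochasticSubgroup d 𝒢' → 𝒢 ≤ 𝒢' → 𝒢' = 𝒢)
    (hq : IsQplex d (cc d (orbitalGerm d 𝒢))) :
    presGroup d (cc d (orbitalGerm d 𝒢))
      = (𝒢 : Set (Matrix.orthogonalGroup (Fin (d^2)) ℝ)) ∧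
    ∀ Q : Set (V d), IsQplex d Q →
      presGroup d Q = (𝒢 : Set (Matrix.orthogonalGroup (Fin (d^2)) ℝ)) →
      Q = cc d (orbitalGerm d 𝒢) := by
  have h0 : (0:ℝ) < d := dpos hd
  set ccG := cc d (orbitalGerm d 𝒢) with hccG
  have hsub : ccG ⊆ probSimplex d := fun x hx => (hq.1 hx).1
  constructor
  · -- presGroup ccG = 𝒢
    have hle : 𝒢 ≤ presSubgroup d ccG := fun R hR => mvec_cc_eq hd hst hR
    have hst' : IsStochasticSubgroup d (presSubgroup d ccG) := by
      intro R hR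
      have hR' : mvec d (R : Matrix (Fin (d^2)) (Fin (d^2)) ℝ) '' ccG = ccG := hR
      have hcmem : cpt d ∈ ccG := cpt_mem_cc hd hst
      have hRc : mvec d (R : Matrix (Fin (d^2)) (Fin (d^2)) ℝ) (cpt d) ∈ ccG := by
        rw [← hR']; exact ⟨cpt d, hcmem, rfl⟩
      have hfix : mvec d (R : Matrix (Fin (d^2)) (Fin (d^2)) ℝ) (cpt d) = cpt d := by
        refine unique_min hd (hsub hRc).1 ?_
        rw [ip_mvec R, ip_cpt_self hd]
      refine ⟨?_, hfix⟩
      intro i j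
      have hrow : ∀ i, ∑ j, (R : Matrix (Fin (d^2)) (Fin (d^2)) ℝ) i j = 1 :=
        fun i => rowsum_one hd hfix i
      have hmem : mvec d (R : Matrix (Fin (d^2)) (Fin (d^2)) ℝ) (basisDist d j) ∈ ccG := by
        rw [← hR']
        exact ⟨basisDist d j, germ_subset_cc (basisDist_mem_germ hd hst j), rfl⟩
      have hpos := (hsub hmem).2 i
      rw [mvec_basisDist hd hrow j] at hpos
      have hden : (0:ℝ) < (d:ℝ)*((d:ℝ)+1) := by positivity
      have h2 : (0:ℝ) ≤ (d:ℝ) * (R : Matrix (Fin (d^2)) (Fin (d^2)) ℝ) i j + 1 := by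
        rcases div_nonneg_iff.mp hpos with ⟨h, -⟩ | ⟨-, h⟩
        · exact h
        · linarith
      have : -(1/(d:ℝ)) = (-1)/(d:ℝ) := by ring
      rw [this, div_le_iff₀ h0]
      nlinarith
    have heq := hmax (presSubgroup d ccG) hst' hle
    calc presGroup d ccG
        = ((presSubgroup d ccG : Subgroup _) :
            Set (Matrix.orthogonalGroup (Fin (d^2)) ℝ)) := rfl
      _ = (𝒢 : Set (Matrix.orthogonalGroup (Fin (d^2)) ℝ)) := by rw [heq]
  · -- uniqueness
    intro Q hQ hpres
    have hGQ : orbitalGerm d 𝒢 ⊆ Q := by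
      intro s hs
      rw [germ_repr hd hst] at hs
      obtain ⟨R, hR, i, rfl⟩ := hs
      have hRp : mvec d (R : Matrix (Fin (d^2)) (Fin (d^2)) ℝ) '' Q = Q := by
        have : R ∈ presGroup d Q := by rw [hpres]; exact hR
        exact this
      rw [← hRp]
      exact ⟨basisDist d i, basisDist_mem_qplex hd hQ i, rfl⟩
    have hQconv : Convex ℝ Q := by rw [hQ.2]; exact polar_convex Q
    have hQclosed : IsClosed Q := by rw [hQ.2]; exact polar_closed Q
    have hccQ : ccG ⊆ Q := closure_minimal (convexHull_min hGQ hQconv) hQclosed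
    refine Set.Subset.antisymm ?_ hccQ
    calc Q = polar d Q := hQ.2
      _ ⊆ polar d ccG := polar_antitone hccQ
      _ = ccG := hq.2.symm
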